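/- Let Ω′ be an open set with cl(Ω′) ⊂ Ω, let φ : cl(Ω′) → ℝ be continuous on cl(Ω′) and twice continuously differentiable on Ω′ with −Δφ = 1 on Ω′ and φ = 0 on ∂Ω′, and let c > 0. Let u be a classical solution of the regularized problem with boundary value ε on Ω × (0,∞) satisfying u ≥ ε on cl(Ω) × (0,∞) and u(x,0) ≥ c·φ(x) for all x ∈ Ω′. Then u(x,t) ≥ (c/(1+ct))·φ(x) for all x ∈ Ω′ and all t > 0. -/

import Mathlib

open MeasureTheory Set

noncomputable def lapl {n : ℕ} (f : EuclideanSpace ℝ (Fin n) → ℝ)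
    (x : EuclideanSpace ℝ (Fin n)) : ℝ :=
  ∑ i : Fin n, fderiv ℝ (fun y => fderiv ℝ f y (EuclideanSpace.single i 1)) x
      (EuclideanSpace.single i 1)

/-- A classical solution of the regularized problem
`uₜ = uΔu + u·min(1/ε, ∫_Ω |∇u|²)`, `u|_{∂Ω} = ε`, on `Ω × (0,∞)`. -/
structure IsRegSol (n : ℕ) (Ω : Set (EuclideanSpace ℝ (Fin n))) (ε : ℝ)
    (u : EuclideanSpace ℝ (Fin n) → ℝ → ℝ) : Prop where
  cont : ContinuousOn (fun p : EuclideanSpace ℝ (Fin n) × ℝ => u p.1 p.2)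
      (closure Ω ×ˢ Ici (0 : ℝ))
  pos : ∀ x ∈ closure Ω, ∀ t : ℝ, 0 < t → 0 < u x t
  diff_t : ∀ x ∈ closure Ω, ∀ t : ℝ, 0 < t → DifferentiableAt ℝ (u x) t
  diff_x : ∀ x ∈ closure Ω, ∀ t : ℝ, 0 < t → DifferentiableAt ℝ (fun y => u y t) x
  diff_xx : ∀ x ∈ closure Ω, ∀ t : ℝ, 0 < t → ∀ i : Fin n,
      DifferentiableAt ℝ
        (fun y => fderiv ℝ (fun z => u z t) y (EuclideanSpace.single i 1)) x
  cont_dt : ContinuousOn (fun p : EuclideanSpace ℝ (Fin n) × ℝ => deriv (u p.1) p.2)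
      (closure Ω ×ˢ Ioi (0 : ℝ))
  cont_grad : ContinuousOn
      (fun p : EuclideanSpace ℝ (Fin n) × ℝ => gradient (fun y => u y p.2) p.1)
      (closure Ω ×ˢ Ioi (0 : ℝ))
  cont_lap : ContinuousOn
      (fun p : EuclideanSpace ℝ (Fin n) × ℝ => lapl (fun y => u y p.2) p.1)
      (closure Ω ×ˢ Ioi (0 : ℝ))
  eqn : ∀ x ∈ Ω, ∀ t : ℝ, 0 < t →
      deriv (u x) t =
        u x t * lapl (fun y => u y t) x +
          u x t * min (1 / ε) (∫ y in Ω, ‖gradient (fun z => u z t) y‖ ^ 2)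
  bdry : ∀ x ∈ frontier Ω, ∀ t : ℝ, 0 < t → u x t = ε

open Filter Metric in
private lemma sd_test {E : Type*} [NormedAddCommGroup E] [NormedSpace ℝ E]
    {F : E → ℝ} {x0 e : E} (he : ‖e‖ = 1) {r : ℝ} (hr : 0 < r)
    (hdiff : ∀ y ∈ Metric.ball x0 r, DifferentiableAt ℝ F y)
    (hH : DifferentiableAt ℝ (fun y => fderiv ℝ F y e) x0)
    (hmin : ∀ y ∈ Metric.ball x0 r, F x0 ≤ F y) :
    0 ≤ fderiv ℝ (fun y => fderiv ℝ F y e) x0 e := by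
  by_contra hA
  push_neg at hA
  set A := fderiv ℝ (fun y => fderiv ℝ F y e) x0 e with hAdef
  set L : ℝ → E := fun s => x0 + s • e with hLdef
  have hL0 : L 0 = x0 := by simp [hLdef]
  have hLmem : ∀ s : ℝ, |s| < r → L s ∈ Metric.ball x0 r := by
    intro s hs
    simp only [hLdef, Metric.mem_ball, dist_eq_norm, add_sub_cancel_left, norm_smul, he,
      Real.norm_eq_abs, mul_one]
    exact hs
  have hLd : ∀ s : ℝ, HasDerivAt L e s := by
    intro s
    have := ((hasDerivAt_id s).smul_const e).const_add x0
    rwa [one_smul] at this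
  have hh : ∀ s : ℝ, |s| < r → HasDerivAt (F ∘ L) (fderiv ℝ F (L s) e) s := by
    intro s hs
    exact ((hdiff _ (hLmem s hs)).hasFDerivAt).comp_hasDerivAt s (hLd s)
  set k : ℝ → ℝ := (fun y => fderiv ℝ F y e) ∘ L with hkdef
  have hk : HasDerivAt k A 0 := by
    have h1 : HasFDerivAt (fun y => fderiv ℝ F y e)
        (fderiv ℝ (fun y => fderiv ℝ F y e) x0) (L 0) := by rw [hL0]; exact hH.hasFDerivAt
    exact h1.comp_hasDerivAt 0 (hLd 0)
  have hlm : IsLocalMin (F ∘ L) 0 := by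
    have hb : Metric.ball (0:ℝ) r ∈ nhds (0:ℝ) := Metric.ball_mem_nhds _ hr
    refine Filter.eventually_of_mem hb ?_
    intro s hs
    have hs' : |s| < r := by simpa [Real.norm_eq_abs] using mem_ball_zero_iff.1 hs
    have := hmin _ (hLmem s hs')
    simpa [Function.comp, hL0] using this
  have hd0 : deriv (F ∘ L) 0 = 0 := hlm.deriv_eq_zero
  have hk0 : k 0 = 0 := by
    have h2 := (hh 0 (by simpa using hr)).deriv
    simp only [hkdef, Function.comp]
    rw [← h2, hd0]
  have hslope : Tendsto (slope k 0) (nhdsWithin 0 {(0:ℝ)}ᶜ) (nhds A) :=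
    hasDerivAt_iff_tendsto_slope.1 hk
  have hev : ∀ᶠ s in nhdsWithin 0 {(0:ℝ)}ᶜ, slope k 0 s < 0 :=
    hslope.eventually_lt_const hA
  rw [eventually_nhdsWithin_iff, Metric.eventually_nhds_iff] at hev
  obtain ⟨δ, hδ, hδ'⟩ := hev
  set ρ : ℝ := min δ r with hρdef
  have hρ : 0 < ρ := lt_min hδ hr
  have hkneg : ∀ s : ℝ, 0 < s → s < ρ → k s < 0 := by
    intro s hs hsρ
    have h1 : slope k 0 s < 0 := by
      apply hδ'
      · simp only [Real.dist_eq, sub_zero, abs_of_pos hs]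
        exact lt_of_lt_of_le hsρ (min_le_left _ _)
      · simp [ne_of_gt hs]
    have h2 : slope k 0 s = k s / s := by simp [slope_def_field, hk0]
    rw [h2] at h1
    have := mul_neg_of_neg_of_pos h1 hs
    rwa [div_mul_cancel₀ _ (ne_of_gt hs)] at this
  -- derivative of F ∘ L equals k on (-r, r)
  have hderiv_eq : ∀ s ∈ interior (Icc (0:ℝ) (ρ/2)), deriv (F ∘ L) s < 0 := by
    intro s hs
    rw [interior_Icc, mem_Ioo] at hs
    have hsr : |s| < r := by
      rw [abs_of_pos hs.1]
      calc s < ρ/2 := hs.2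
        _ ≤ r := by have := min_le_right δ r; linarith
    rw [(hh s hsr).deriv]
    have : k s < 0 := hkneg s hs.1 (by have := hs.2; linarith)
    simpa [hkdef, Function.comp] using this
  have hcont : ContinuousOn (F ∘ L) (Icc 0 (ρ/2)) := by
    intro s hs
    have hsr : |s| < r := by
      rw [mem_Icc] at hs
      rw [abs_of_nonneg hs.1]
      have := min_le_right δ r
      linarith [hs.2]
    exact ((hh s hsr).continuousAt).continuousWithinAt
  have hanti := strictAntiOn_of_deriv_neg (convex_Icc _ _) hcont hderiv_eq
  have hlt : (F ∘ L) (ρ/2) < (F ∘ L) 0 :=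
    hanti (by constructor <;> linarith) (by constructor <;> linarith) (by linarith)
  have hge : (F ∘ L) 0 ≤ (F ∘ L) (ρ/2) := by
    have hsr : |ρ/2| < r := by
      rw [abs_of_pos (by linarith)]
      have := min_le_right δ r
      linarith
    have := hmin _ (hLmem _ hsr)
    simpa [Function.comp, hL0] using this
  linarith

open Filter in
private lemma deriv_nonpos_left {ψ : ℝ → ℝ} {t0 : ℝ} (ht0 : 0 < t0)
    (hd : DifferentiableAt ℝ ψ t0)
    (h : ∀ t, 0 ≤ t → t < t0 → ψ t0 < ψ t) : deriv ψ t0 ≤ 0 := by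
  have hdw : HasDerivWithinAt ψ (deriv ψ t0) (Iio t0) t0 :=
    hd.hasDerivAt.hasDerivWithinAt
  have hset : Iio t0 \ {t0} = Iio t0 := by
    ext s; simp only [mem_diff, mem_Iio, mem_singleton_iff]
    constructor
    · exact fun hs => hs.1
    · exact fun hs => ⟨hs, ne_of_lt hs⟩
  have hslope := hasDerivWithinAt_iff_tendsto_slope.1 hdw
  rw [hset] at hslope
  have hmem : Ioo 0 t0 ∈ nhdsWithin t0 (Iio t0) :=
    Ioo_mem_nhdsLT_of_mem (by constructor <;> linarith)
  refine le_of_tendsto hslope ?_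
  filter_upwards [hmem] with t ht
  rw [mem_Ioo] at ht
  have hnum : 0 < ψ t - ψ t0 := by linarith [h t ht.1.le ht.2]
  have hden : t - t0 < 0 := by linarith
  rw [slope_def_field]
  exact (div_neg_of_pos_of_neg hnum hden).le

set_option maxHeartbeats 1000000 in
/-- Comparison from below with the subsolution (c/(1+ct))·φ on a compactly
contained subdomain Ω′, where −Δφ = 1 in Ω′ and φ = 0 on ∂Ω′. -/
theorem stmt_7 {n : ℕ} (hn : 1 ≤ n) {Ω : Set (EuclideanSpace ℝ (Fin n))}
    (hΩo : IsOpen Ω) (hΩb : Bornology.IsBounded Ω)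
    {Ω' : Set (EuclideanSpace ℝ (Fin n))} (hΩ'o : IsOpen Ω')
    (hsub : closure Ω' ⊆ Ω)
    {φ : EuclideanSpace ℝ (Fin n) → ℝ} (hφc : ContinuousOn φ (closure Ω'))
    (hφ2 : ContDiffOn ℝ 2 φ Ω') (hφeq : ∀ x ∈ Ω', lapl φ x = -1)
    (hφ0 : ∀ x ∈ frontier Ω', φ x = 0)
    {c : ℝ} (hc : 0 < c) {ε : ℝ} (hε : 0 < ε)
    {u : EuclideanSpace ℝ (Fin n) → ℝ → ℝ} (hu : IsRegSol n Ω ε u)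
    (hge : ∀ x ∈ closure Ω, ∀ t : ℝ, 0 < t → ε ≤ u x t)
    (h0 : ∀ x ∈ Ω', c * φ x ≤ u x 0) :
    ∀ x ∈ Ω', ∀ t : ℝ, 0 < t → (c / (1 + c * t)) * φ x ≤ u x t := by
  have hsub' : closure Ω' ⊆ closure Ω := hsub.trans subset_closure
  intro x1 hx1 t1 ht1
  by_contra hcon
  push_neg at hcon
  set δ : ℝ := ((c / (1 + c * t1)) * φ x1 - u x1 t1) / (2 * (1 + t1)) with hδdef
  have ht1' : (0:ℝ) < 1 + t1 := by linarith
  have hδpos : 0 < δ := by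
    apply div_pos (by linarith) (by linarith)
  set G : EuclideanSpace ℝ (Fin n) × ℝ → ℝ :=
    fun p => u p.1 p.2 - (c / (1 + c * p.2)) * φ p.1 + δ * (1 + p.2) with hGdef
  set T := t1
  -- continuity of G on K
  set K : Set (EuclideanSpace ℝ (Fin n) × ℝ) := closure Ω' ×ˢ Icc 0 T with hKdef
  have hKsub : K ⊆ closure Ω ×ˢ Ici (0:ℝ) := prod_mono hsub' Icc_subset_Ici_self
  have hGcont : ContinuousOn G K := by
    have h1 : ContinuousOn (fun p : EuclideanSpace ℝ (Fin n) × ℝ => u p.1 p.2) K :=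
      hu.cont.mono hKsub
    have h2 : ContinuousOn (fun p : EuclideanSpace ℝ (Fin n) × ℝ => φ p.1) K :=
      hφc.comp continuous_fst.continuousOn (fun p hp => hp.1)
    have h3 : ContinuousOn (fun p : EuclideanSpace ℝ (Fin n) × ℝ => c / (1 + c * p.2)) K := by
      apply continuousOn_const.div
      · exact (continuous_const.add (continuous_const.mul continuous_snd)).continuousOn
      · intro p hp
        have : (0:ℝ) ≤ p.2 := hp.2.1
        nlinarith
    exact (h1.sub (h3.mul h2)).add
      (continuous_const.mul (continuous_const.add continuous_snd)).continuousOn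
  have hclK : IsCompact (closure Ω') :=
    Metric.isCompact_of_isClosed_isBounded isClosed_closure ((hΩb.subset hsub))
  have hKcomp : IsCompact K := hclK.prod isCompact_Icc
  set M : Set (EuclideanSpace ℝ (Fin n) × ℝ) := K ∩ G ⁻¹' Iic 0 with hMdef
  have hMclosed : IsClosed M :=
    hGcont.preimage_isClosed_of_isClosed (isClosed_closure.prod isClosed_Icc) isClosed_Iic
  have hMcomp : IsCompact M := hKcomp.of_isClosed_subset hMclosed inter_subset_left
  set S : Set ℝ := Prod.snd '' M with hSdef
  have hScomp : IsCompact S := hMcomp.image continuous_snd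
  -- G (x1, t1) ≤ 0
  have hG11 : G (x1, t1) ≤ 0 := by
    have hδt : δ * (1 + t1) = ((c / (1 + c * t1)) * φ x1 - u x1 t1) / 2 := by
      have hne : (1 + c * t1) ≠ 0 := ne_of_gt (by nlinarith)
      rw [hδdef]; field_simp; simp only [T]; ring
    simp only [hGdef]
    rw [hδt]
    linarith
  have hSne : S.Nonempty :=
    ⟨t1, ⟨(x1, t1), ⟨⟨subset_closure hx1, ⟨ht1.le, le_refl _⟩⟩, hG11⟩, rfl⟩⟩
  set t0 := sInf S with ht0def
  have ht0S : t0 ∈ S := hScomp.sInf_mem hSne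
  obtain ⟨pw, hwM, hwt⟩ := ht0S
  have hwK : (pw.1, t0) ∈ K := by rw [← hwt]; exact hwM.1
  have hwG : G (pw.1, t0) ≤ 0 := by rw [← hwt]; exact hwM.2
  have ht0mem : t0 ∈ Icc (0:ℝ) T := hwK.2
  -- extension of h0 to closure
  have h0ext : ∀ x ∈ closure Ω', c * φ x ≤ u x 0 := by
    have hu0cont : ContinuousOn (fun x => u x 0) (closure Ω') := by
      apply hu.cont.comp (continuous_id.prodMk continuous_const).continuousOn
      intro x hx
      refine ⟨hsub' hx, ?_⟩
      simp
    set C := closure Ω' ∩ (fun x => u x 0 - c * φ x) ⁻¹' Ici 0 with hCdef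
    have hCclosed : IsClosed C :=
      (hu0cont.sub (continuousOn_const.mul hφc)).preimage_isClosed_of_isClosed
        isClosed_closure isClosed_Ici
    have hsubC : Ω' ⊆ C := fun x hx =>
      ⟨subset_closure hx, by simp only [mem_preimage, mem_Ici, sub_nonneg]; exact h0 x hx⟩
    have := closure_minimal hsubC hCclosed
    intro x hx
    have := this hx
    have h2 := this.2
    simp only [mem_preimage, mem_Ici, sub_nonneg] at h2
    exact h2
  -- t0 > 0
  have ht0pos : 0 < t0 := by
    rcases lt_or_eq_of_le ht0mem.1 with h | h
    · exact h
    · exfalso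
      have hG0 : 0 < G (pw.1, 0) := by
        simp only [hGdef]
        have h1 := h0ext pw.1 hwK.1
        have hcc : c / (1 + c * (0:ℝ)) = c := by norm_num
        rw [hcc]
        nlinarith
      rw [← h] at hwG
      linarith
  -- for t < t0, G positive
  have hSbdd : BddBelow S := ⟨0, fun t ht => by
    obtain ⟨p, hpM, hpt⟩ := ht
    rw [← hpt]; exact hpM.1.2.1⟩
  have hpre : ∀ t, 0 ≤ t → t < t0 → ∀ x ∈ closure Ω', 0 < G (x, t) := by
    intro t ht htlt x hx
    by_contra hle
    push_neg at hle
    have : t ∈ S := ⟨(x, t), ⟨⟨hx, ⟨ht, le_trans htlt.le ht0mem.2⟩⟩, hle⟩, rfl⟩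
    exact absurd (csInf_le hSbdd this) (not_le.mpr htlt)
  -- minimizer x0 at time t0
  have hGt0cont : ContinuousOn (fun x => G (x, t0)) (closure Ω') := by
    apply hGcont.comp (continuous_id.prodMk continuous_const).continuousOn
    intro x hx
    exact ⟨hx, ht0mem⟩
  obtain ⟨x0, hx0mem, hx0min⟩ :=
    hclK.exists_isMinOn ⟨x1, subset_closure hx1⟩ hGt0cont
  have hG0 : G (x0, t0) ≤ 0 := le_trans (hx0min hwK.1) hwG
  -- x0 ∈ Ω'
  have hx0Ω' : x0 ∈ Ω' := by
    by_contra hxf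
    have hfr : x0 ∈ frontier Ω' := by
      rw [frontier, hΩ'o.interior_eq]
      exact ⟨hx0mem, hxf⟩
    have hφ00 : φ x0 = 0 := hφ0 x0 hfr
    have huε : ε ≤ u x0 t0 := hge x0 (hsub' hx0mem) t0 ht0pos
    have : 0 < G (x0, t0) := by
      simp only [hGdef, hφ00]
      nlinarith
    linarith
  -- setup for spatial and time analysis at (x0, t0)
  have hden0 : (0:ℝ) < 1 + c * t0 := by nlinarith [ht0mem.1]
  set a : ℝ := c / (1 + c * t0) with hadef
  have hapos : 0 < a := div_pos hc hden0
  obtain ⟨r, hr, hball⟩ := Metric.isOpen_iff.1 hΩ'o x0 hx0Ω'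
  set F : EuclideanSpace ℝ (Fin n) → ℝ := fun y => u y t0 - a * φ y with hFdef
  have hφdiffat : ∀ y ∈ Metric.ball x0 r, DifferentiableAt ℝ φ y := fun y hy =>
    (hφ2.contDiffAt (hΩ'o.mem_nhds (hball hy))).differentiableAt (by norm_num)
  have hudiffat : ∀ y ∈ Metric.ball x0 r, DifferentiableAt ℝ (fun z => u z t0) y := fun y hy =>
    hu.diff_x y (hsub' (subset_closure (hball hy))) t0 ht0pos
  have hFdiff : ∀ y ∈ Metric.ball x0 r, DifferentiableAt ℝ F y := fun y hy =>
    (hudiffat y hy).sub ((hφdiffat y hy).const_mul a)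
  have hFmin : ∀ y ∈ Metric.ball x0 r, F x0 ≤ F y := by
    intro y hy
    have h1 := isMinOn_iff.1 hx0min y (subset_closure (hball hy))
    simp only [hGdef, hFdef] at h1 ⊢
    rw [← hadef] at h1
    linarith
  have hkey : ∀ i : Fin n,
      0 ≤ fderiv ℝ (fun y => fderiv ℝ (fun z => u z t0) y (EuclideanSpace.single i 1)) x0
            (EuclideanSpace.single i 1)
          - a * fderiv ℝ (fun y => fderiv ℝ φ y (EuclideanSpace.single i 1)) x0
            (EuclideanSpace.single i 1) := by
    intro i
    set e : EuclideanSpace ℝ (Fin n) := EuclideanSpace.single i 1 with hedef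
    have he : ‖e‖ = 1 := by
      simp [hedef, EuclideanSpace.norm_single]
    have hEq : (fun y => fderiv ℝ F y e) =ᶠ[nhds x0]
        (fun y => fderiv ℝ (fun z => u z t0) y e - a * fderiv ℝ φ y e) := by
      filter_upwards [Metric.ball_mem_nhds x0 hr] with y hy
      have h1 : fderiv ℝ F y = fderiv ℝ (fun z => u z t0) y - a • fderiv ℝ φ y := by
        rw [hFdef]
        rw [fderiv_fun_sub (hudiffat y hy) ((hφdiffat y hy).const_mul a),
          fderiv_const_mul (hφdiffat y hy)]
      rw [h1]
      simp
    have hφ1 : DifferentiableAt ℝ (fun y => fderiv ℝ φ y e) x0 := by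
      have h2 : ContDiffAt ℝ 2 φ x0 := hφ2.contDiffAt (hΩ'o.mem_nhds hx0Ω')
      have h3 : ContDiffAt ℝ 1 (fderiv ℝ φ) x0 := h2.fderiv_right (by norm_num)
      exact (h3.differentiableAt one_ne_zero).clm_apply (differentiableAt_const e)
    have hu1 : DifferentiableAt ℝ (fun y => fderiv ℝ (fun z => u z t0) y e) x0 :=
      hu.diff_xx x0 (hsub' (subset_closure hx0Ω')) t0 ht0pos i
    have hRHS : DifferentiableAt ℝ
        (fun y => fderiv ℝ (fun z => u z t0) y e - a * fderiv ℝ φ y e) x0 :=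
      hu1.sub (hφ1.const_mul a)
    have hH : DifferentiableAt ℝ (fun y => fderiv ℝ F y e) x0 :=
      (hEq.differentiableAt_iff).mpr hRHS
    have hsd := sd_test he hr hFdiff hH hFmin
    have hfd : fderiv ℝ (fun y => fderiv ℝ F y e) x0 =
        fderiv ℝ (fun y => fderiv ℝ (fun z => u z t0) y e - a * fderiv ℝ φ y e) x0 :=
      hEq.fderiv_eq
    have hsub2 : fderiv ℝ (fun y => fderiv ℝ (fun z => u z t0) y e - a * fderiv ℝ φ y e) x0 =
        fderiv ℝ (fun y => fderiv ℝ (fun z => u z t0) y e) x0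
          - a • fderiv ℝ (fun y => fderiv ℝ φ y e) x0 := by
      rw [fderiv_fun_sub hu1 (hφ1.const_mul a), fderiv_const_mul hφ1]
    rw [hfd, hsub2] at hsd
    simpa using hsd
  have hlapu : -a ≤ lapl (fun y => u y t0) x0 := by
    have hlapφ : lapl φ x0 = -1 := hφeq x0 hx0Ω'
    have hsum : 0 ≤ lapl (fun y => u y t0) x0 - a * lapl φ x0 := by
      rw [lapl, lapl, Finset.mul_sum, ← Finset.sum_sub_distrib]
      exact Finset.sum_nonneg fun i _ => hkey i
    rw [hlapφ] at hsum
    linarith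
  -- time derivative at t0
  have hψ : HasDerivAt (fun t => G (x0, t))
      (deriv (u x0) t0 + (c ^ 2 / (1 + c * t0) ^ 2) * φ x0 + δ) t0 := by
    have hden : HasDerivAt (fun t : ℝ => 1 + c * t) c t0 := by
      simpa using ((hasDerivAt_id t0).const_mul c).const_add 1
    have hA : HasDerivAt (fun t : ℝ => c / (1 + c * t)) (-(c ^ 2) / (1 + c * t0) ^ 2) t0 := by
      have h5 := (hasDerivAt_const t0 c).div hden (ne_of_gt hden0)
      exact h5.congr_deriv (by ring)
    have hut : HasDerivAt (u x0) (deriv (u x0) t0) t0 :=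
      (hu.diff_t x0 (hsub' (subset_closure hx0Ω')) t0 ht0pos).hasDerivAt
    have hδt : HasDerivAt (fun t : ℝ => δ * (1 + t)) δ t0 := by
      simpa using ((hasDerivAt_id t0).const_add 1).const_mul δ
    have h6 := (hut.sub (hA.mul_const (φ x0))).add hδt
    exact h6.congr_deriv (by ring)
  have hψle : deriv (fun t => G (x0, t)) t0 ≤ 0 := by
    apply deriv_nonpos_left ht0pos hψ.differentiableAt
    intro t h1 h2
    have h3 := hpre t h1 h2 x0 hx0mem
    linarith
  rw [hψ.deriv] at hψle
  -- the PDE at (x0, t0)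
  have heqn := hu.eqn x0 (hsub (subset_closure hx0Ω')) t0 ht0pos
  have hm : 0 ≤ min (1 / ε) (∫ y in Ω, ‖gradient (fun z => u z t0) y‖ ^ 2) :=
    le_min (by positivity) (integral_nonneg fun y => by positivity)
  have hu00 : ε ≤ u x0 t0 := hge x0 (hsub' (subset_closure hx0Ω')) t0 ht0pos
  have hu00pos : 0 < u x0 t0 := lt_of_lt_of_le hε hu00
  have hUt : -a * u x0 t0 ≤ deriv (u x0) t0 := by
    rw [heqn]
    have h1 : u x0 t0 * (-a) ≤ u x0 t0 * lapl (fun y => u y t0) x0 :=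
      mul_le_mul_of_nonneg_left hlapu hu00pos.le
    nlinarith [mul_nonneg hu00pos.le hm]
  have hG0' : u x0 t0 - a * φ x0 + δ * (1 + t0) ≤ 0 := by
    have h7 := hG0
    simp only [hGdef] at h7
    rw [← hadef] at h7
    exact h7
  have ha2 : c ^ 2 / (1 + c * t0) ^ 2 = a ^ 2 := by rw [hadef, div_pow]
  rw [ha2] at hψle
  nlinarith [mul_le_mul_of_nonneg_left hG0' hapos.le, mul_pos hapos hδpos,
    mul_pos (mul_pos hapos hδpos) ht0pos]
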